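/- Let A be a finite nontrivial temporal Heyting algebra (0 ≠ 1). Then there exists a least congruence among the congruences of A different from the diagonal relation if and only if the ◆-compatible elements of A have a second-greatest element: there exists a ◆-compatible element a ≠ 1 such that every ◆-compatible element b ≠ 1 satisfies b ≤ a. -/

import Mathlib

/-- A congruence of a temporal Heyting algebra. -/
def IsCong {A : Type*} [HeytingAlgebra A] (box dia : A → A) (θ : A → A → Prop) : Prop :=
  Equivalence θ ∧
  (∀ a b c d : A, θ a b → θ c d → θ (a ⊓ c) (b ⊓ d)) ∧
  (∀ a b c d : A, θ a b → θ c d → θ (a ⊔ c) (b ⊔ d)) ∧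
  (∀ a b c d : A, θ a b → θ c d → θ (a ⇨ c) (b ⇨ d)) ∧
  (∀ a b : A, θ a b → θ (box a) (box b)) ∧
  (∀ a b : A, θ a b → θ (dia a) (dia b))

/-- A ◆-compatible element of a temporal Heyting algebra. -/
def DiaCompat {A : Type*} [HeytingAlgebra A] (dia : A → A) (a : A) : Prop :=
  ∀ b : A, a ⊓ dia b ≤ dia (a ⊓ b)

section Aux

variable {A : Type*} [HeytingAlgebra A] (box dia : A → A)

lemma aux_congMk_isCong
    (hbox_meet : ∀ a b : A, box (a ⊓ b) = box a ⊓ box b)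
    (hbox_incr : ∀ a : A, a ≤ box a)
    (hadj : ∀ a b : A, dia a ≤ b ↔ a ≤ box b)
    (u : A) (hu : DiaCompat dia u) :
    IsCong box dia (fun x y => u ⊓ x = u ⊓ y) := by
  have dmono : ∀ {a b : A}, a ≤ b → dia a ≤ dia b := fun h =>
    (hadj _ _).2 (h.trans ((hadj _ _).1 le_rfl))
  have himp_half : ∀ a b c d : A, u ⊓ a = u ⊓ b → u ⊓ c = u ⊓ d →
      u ⊓ (a ⇨ c) ≤ b ⇨ d := by
    intro a b c d h1 h2
    rw [le_himp_iff]
    calc u ⊓ (a ⇨ c) ⊓ b = (u ⊓ b) ⊓ (a ⇨ c) := by ac_rfl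
      _ = (u ⊓ a) ⊓ (a ⇨ c) := by rw [← h1]
      _ = u ⊓ (a ⊓ (a ⇨ c)) := by rw [inf_assoc]
      _ = u ⊓ (a ⊓ c) := by rw [inf_himp]
      _ ≤ u ⊓ c := inf_le_inf_left _ inf_le_right
      _ = u ⊓ d := h2
      _ ≤ d := inf_le_right
  refine ⟨⟨fun _ => rfl, fun h => h.symm, fun h h' => h.trans h'⟩, ?_, ?_, ?_, ?_, ?_⟩
  · intro a b c d h1 h2
    rw [inf_inf_distrib_left, h1, h2, ← inf_inf_distrib_left]
  · intro a b c d h1 h2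
    rw [inf_sup_left, h1, h2, ← inf_sup_left]
  · intro a b c d h1 h2
    exact le_antisymm
      (le_inf inf_le_left (himp_half a b c d h1 h2))
      (le_inf inf_le_left (himp_half b a d c h1.symm h2.symm))
  · intro a b h
    have key : ∀ x y : A, u ⊓ x = u ⊓ y → u ⊓ box x ≤ u ⊓ box y := by
      intro x y hxy
      refine le_inf inf_le_left ?_
      calc u ⊓ box x ≤ box u ⊓ box x := inf_le_inf_right _ (hbox_incr u)
        _ = box (u ⊓ x) := (hbox_meet _ _).symm
        _ = box (u ⊓ y) := by rw [hxy]
        _ = box u ⊓ box y := hbox_meet _ _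
        _ ≤ box y := inf_le_right
    exact le_antisymm (key a b h) (key b a h.symm)
  · intro a b h
    have key : ∀ x y : A, u ⊓ x = u ⊓ y → u ⊓ dia x ≤ u ⊓ dia y := by
      intro x y hxy
      refine le_inf inf_le_left ?_
      calc u ⊓ dia x ≤ dia (u ⊓ x) := hu x
        _ = dia (u ⊓ y) := by rw [hxy]
        _ ≤ dia y := dmono inf_le_right
    exact le_antisymm (key a b h) (key b a h.symm)

lemma aux_exists_min [Finite A]
    (θ : A → A → Prop) (hθ : IsCong box dia θ) :
    ∃ u : A, θ u ⊤ ∧ DiaCompat dia u ∧ (∀ x, θ x ⊤ → u ≤ x) ∧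
      (∀ x y, θ x y ↔ u ⊓ x = u ⊓ y) := by
  classical
  obtain ⟨heq, hmeet, hjoin, himp, hbox, hdia⟩ := hθ
  have hFfin : {x : A | θ x ⊤}.Finite := Set.toFinite _
  set s : Finset A := hFfin.toFinset with hs
  set u : A := s.inf id with hudef
  have hinf : ∀ t : Finset A, (∀ x ∈ t, θ x ⊤) → θ (t.inf id) ⊤ := by
    intro t
    induction t using Finset.induction_on with
    | empty => intro _; simpa using heq.refl (⊤ : A)
    | insert _ _ hx ih =>
      intro h
      rw [Finset.inf_insert]
      have h1 : θ _ ⊤ := h _ (Finset.mem_insert_self _ _)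
      have h2 : θ _ ⊤ := ih (fun x hxmem => h x (Finset.mem_insert_of_mem hxmem))
      have := hmeet _ ⊤ _ ⊤ h1 h2
      simpa using this
  have humem : θ u ⊤ := by
    apply hinf
    intro x hx
    exact (hFfin.mem_toFinset).1 hx
  have hule : ∀ x, θ x ⊤ → u ≤ x := by
    intro x hx
    exact Finset.inf_le ((hFfin.mem_toFinset).2 hx)
  have hucompat : DiaCompat dia u := by
    intro b
    have h1 : θ (b ⊓ u) b := by
      have := hmeet b b u ⊤ (heq.refl b) humem
      simpa using this
    have h2 : θ (dia (b ⊓ u)) (dia b) := hdia _ _ h1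
    have h3 : θ (dia b ⇨ dia (b ⊓ u)) ⊤ := by
      have := himp (dia b) (dia b) (dia (b ⊓ u)) (dia b) (heq.refl _) h2
      simpa using this
    have h4 : u ≤ dia b ⇨ dia (b ⊓ u) := hule _ h3
    calc u ⊓ dia b ≤ dia (b ⊓ u) := le_himp_iff.1 h4
      _ = dia (u ⊓ b) := by rw [inf_comm]
  refine ⟨u, humem, hucompat, hule, ?_⟩
  intro x y
  constructor
  · intro hxy
    have ha : θ (x ⇨ y) ⊤ := by
      have := himp x y y y hxy (heq.refl y)
      simpa using this
    have hb : θ (y ⇨ x) ⊤ := by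
      have := himp y x x x (heq.symm hxy) (heq.refl x)
      simpa using this
    have he : θ ((x ⇨ y) ⊓ (y ⇨ x)) ⊤ := by
      have := hmeet _ ⊤ _ ⊤ ha hb
      simpa using this
    have hue : u ≤ (x ⇨ y) ⊓ (y ⇨ x) := hule _ he
    have h1 : u ⊓ x ≤ y := le_himp_iff.1 (hue.trans inf_le_left)
    have h2 : u ⊓ y ≤ x := le_himp_iff.1 (hue.trans inf_le_right)
    exact le_antisymm (le_inf inf_le_left h1) (le_inf inf_le_left h2)
  · intro h
    have h1 : θ (x ⊓ u) x := by
      have := hmeet x x u ⊤ (heq.refl x) humem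
      simpa using this
    have h2 : θ (y ⊓ u) y := by
      have := hmeet y y u ⊤ (heq.refl y) humem
      simpa using this
    have h3 : x ⊓ u = y ⊓ u := by
      rw [inf_comm x u, inf_comm y u, h]
    exact heq.trans (heq.symm (h3 ▸ h1)) h2

end Aux

/-- A finite nontrivial temporal Heyting algebra has a least non-diagonal
congruence iff its ◆-compatible elements have a second-greatest element. -/
theorem stmt19 {A : Type*} [HeytingAlgebra A] [Finite A] (box dia : A → A)
    (hbox_meet : ∀ a b : A, box (a ⊓ b) = box a ⊓ box b)
    (hbox_incr : ∀ a : A, a ≤ box a)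
    (hbox_front : ∀ a b : A, box a ≤ b ⊔ (b ⇨ a))
    (hadj : ∀ a b : A, dia a ≤ b ↔ a ≤ box b)
    (hnt : (⊥ : A) ≠ ⊤) :
    (∃ θ : A → A → Prop, IsCong box dia θ ∧ θ ≠ (fun a b : A => a = b) ∧
      ∀ θ' : A → A → Prop, IsCong box dia θ' → θ' ≠ (fun a b : A => a = b) →
        ∀ a b : A, θ a b → θ' a b) ↔
    (∃ a : A, DiaCompat dia a ∧ a ≠ ⊤ ∧
      ∀ b : A, DiaCompat dia b → b ≠ ⊤ → b ≤ a) := by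
  constructor
  · rintro ⟨θ, hθ, hne, hleast⟩
    obtain ⟨humem, hucompat, hule, huchar⟩ := (aux_exists_min box dia θ hθ).choose_spec
    set u := (aux_exists_min box dia θ hθ).choose with hu
    refine ⟨u, hucompat, ?_, ?_⟩
    · intro htop
      apply hne
      funext x y
      apply propext
      constructor
      · intro h
        have := (huchar x y).1 h
        rw [htop] at this
        simpa using this
      · rintro rfl
        exact hθ.1.refl x
    · intro b hb hbne
      have hcong := aux_congMk_isCong box dia hbox_meet hbox_incr hadj b hb
      have hne' : (fun x y : A => b ⊓ x = b ⊓ y) ≠ (fun a b : A => a = b) := by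
        intro h
        have h2 : (fun x y : A => b ⊓ x = b ⊓ y) b ⊤ := by simp
        rw [h] at h2
        exact hbne h2
      have hub := hleast _ hcong hne' u ⊤ humem
      simp only [inf_top_eq] at hub
      exact inf_eq_left.mp hub
  · rintro ⟨a, hacompat, hane, hamax⟩
    refine ⟨fun x y => a ⊓ x = a ⊓ y,
      aux_congMk_isCong box dia hbox_meet hbox_incr hadj a hacompat, ?_, ?_⟩
    · intro h
      have h2 : (fun x y : A => a ⊓ x = a ⊓ y) a ⊤ := by simp
      rw [h] at h2
      exact hane h2
    · intro θ' hθ' hne' x y hxy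
      obtain ⟨u, humem, hucompat, hule, huchar⟩ := aux_exists_min box dia θ' hθ'
      have hune : u ≠ ⊤ := by
        intro htop
        apply hne'
        funext p q
        apply propext
        constructor
        · intro h
          have := (huchar p q).1 h
          rw [htop] at this
          simpa using this
        · rintro rfl
          exact hθ'.1.refl p
      have hua : u ≤ a := hamax u hucompat hune
      apply (huchar x y).2
      calc u ⊓ x = u ⊓ (a ⊓ x) := by rw [← inf_assoc, inf_eq_left.2 hua]
        _ = u ⊓ (a ⊓ y) := by rw [hxy]
        _ = u ⊓ y := by rw [← inf_assoc, inf_eq_left.2 hua]
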